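/- Let M be a compact topological space and f : M → ℝ² continuous. Suppose for every t ∈ ℝ²_{0+} = {t ∈ ℝ² : t_0 ≥ 0, t ≠ 0} the set M_t = argmax_{x ∈ M} ⟨t, f(x)⟩ is connected. Then the function V_f(c) = sup { f_0(x) : f_1(x) = c, x ∈ M } is concave on ℝ, and moreover V_f(c) = sup { y_0 : y_1 = c, y ∈ conv(f(M)) } for all c. -/

import Mathlib

open Set

private lemma maxOnAux {M : Type*} [TopologicalSpace M] [CompactSpace M]
    {g : M → ℝ} (hg : Continuous g) {s : Set M} (hs : IsClosed s) (hne : s.Nonempty) :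
    ∃ x ∈ s, ∀ y ∈ s, g y ≤ g x := by
  obtain ⟨x, hx, hmax⟩ := hs.isCompact.exists_isMaxOn hne hg.continuousOn
  exact ⟨x, hx, fun y hy => hmax hy⟩

private lemma core' {M : Type*} [TopologicalSpace M] [CompactSpace M]
    (f : M → ℝ × ℝ) (hf : Continuous f)
    (hconn : ∀ t : ℝ × ℝ, 0 ≤ t.1 → t ≠ 0 →
      IsPreconnected {x : M | ∀ y : M,
        t.1 * (f y).1 + t.2 * (f y).2 ≤ t.1 * (f x).1 + t.2 * (f x).2})
    (xp xq : M) (hpq : (f xp).2 ≤ (f xq).2)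
    (lam : ℝ) (h0 : 0 ≤ lam) (h1 : lam ≤ 1) :
    ∃ x : M, (f x).2 = lam * (f xp).2 + (1 - lam) * (f xq).2 ∧
      lam * (f xp).1 + (1 - lam) * (f xq).1 ≤ (f x).1 := by
  have hf1 : Continuous fun x : M => (f x).1 := continuous_fst.comp hf
  have hf2 : Continuous fun x : M => (f x).2 := continuous_snd.comp hf
  rcases eq_or_lt_of_le hpq with heq | hlt
  · -- equal second coordinates
    rcases le_total ((f xp).1) ((f xq).1) with hle | hle
    · exact ⟨xq, by rw [← heq]; ring, by nlinarith⟩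
    · exact ⟨xp, by rw [← heq]; ring, by nlinarith⟩
  · rcases eq_or_lt_of_le h1 with h1' | h1'
    · exact ⟨xp, by rw [h1']; ring, by rw [h1']; linarith [le_refl ((f xp).1)]⟩
    rcases eq_or_lt_of_le h0 with h0' | h0'
    · exact ⟨xq, by rw [← h0']; ring, by rw [← h0']; linarith [le_refl ((f xq).1)]⟩
    obtain ⟨z2, hz2⟩ : ∃ z2 : ℝ, z2 = lam * (f xp).2 + (1 - lam) * (f xq).2 := ⟨_, rfl⟩
    obtain ⟨z1, hz1⟩ : ∃ z1 : ℝ, z1 = lam * (f xp).1 + (1 - lam) * (f xq).1 := ⟨_, rfl⟩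
    have hpz : (f xp).2 < z2 := by rw [hz2]; nlinarith
    have hzq : z2 < (f xq).2 := by rw [hz2]; nlinarith
    obtain ⟨t1, ht1def⟩ : ∃ t1 : ℝ, t1 = (f xq).2 - (f xp).2 := ⟨_, rfl⟩
    obtain ⟨t2, ht2def⟩ : ∃ t2 : ℝ, t2 = (f xp).1 - (f xq).1 := ⟨_, rfl⟩
    have ht1 : 0 < t1 := by rw [ht1def]; linarith
    obtain ⟨τ, hτ⟩ : ∃ τ : ℝ, τ = t1 * (f xp).1 + t2 * (f xp).2 := ⟨_, rfl⟩
    have hτq : t1 * (f xq).1 + t2 * (f xq).2 = τ := by rw [hτ, ht1def, ht2def]; ring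
    have hτz : t1 * z1 + t2 * z2 = τ := by rw [hτ, hz1, hz2, ht1def, ht2def]; ring
    obtain ⟨g, hg⟩ : ∃ g : ℝ → M → ℝ,
        g = fun s x => t1 * (f x).1 + (t2 + s) * (f x).2 := ⟨_, rfl⟩
    have hgval : ∀ s (x : M), g s x = t1 * (f x).1 + (t2 + s) * (f x).2 := by
      intro s x; rw [hg]
    have hgc : ∀ s, Continuous (g s) := by
      intro s; rw [hg]
      exact (continuous_const.mul hf1).add (continuous_const.mul hf2)
    obtain ⟨Mm, hMm⟩ : ∃ Mm : Set M, Mm = {x | (f x).2 ≤ z2} := ⟨_, rfl⟩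
    obtain ⟨Mp, hMp⟩ : ∃ Mp : Set M, Mp = {x | z2 ≤ (f x).2} := ⟨_, rfl⟩
    have hMmC : IsClosed Mm := by rw [hMm]; exact isClosed_le hf2 continuous_const
    have hMpC : IsClosed Mp := by rw [hMp]; exact isClosed_le continuous_const hf2
    have hMmval : ∀ x : M, x ∈ Mm ↔ (f x).2 ≤ z2 := fun x => by rw [hMm]; rfl
    have hMpval : ∀ x : M, x ∈ Mp ↔ z2 ≤ (f x).2 := fun x => by rw [hMp]; rfl
    have hxpMm : xp ∈ Mm := (hMmval xp).mpr (le_of_lt hpz)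
    have hxqMp : xq ∈ Mp := (hMpval xq).mpr (le_of_lt hzq)
    have keym : ∀ s : ℝ, ∃ a ∈ Mm, ∀ y ∈ Mm, g s y ≤ g s a :=
      fun s => maxOnAux (hgc s) hMmC ⟨xp, hxpMm⟩
    have keyp : ∀ s : ℝ, ∃ a ∈ Mp, ∀ y ∈ Mp, g s y ≤ g s a :=
      fun s => maxOnAux (hgc s) hMpC ⟨xq, hxqMp⟩
    choose xm hxmMem hxmMax using keym
    choose xP hxPMem hxPMax using keyp
    obtain ⟨mm, hmm⟩ : ∃ mm : ℝ → ℝ, mm = fun s => g s (xm s) := ⟨_, rfl⟩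
    obtain ⟨mp, hmp⟩ : ∃ mp : ℝ → ℝ, mp = fun s => g s (xP s) := ⟨_, rfl⟩
    have hmmval : ∀ s, mm s = g s (xm s) := fun s => by rw [hmm]
    have hmpval : ∀ s, mp s = g s (xP s) := fun s => by rw [hmp]
    obtain ⟨h, hh⟩ : ∃ h : ℝ → ℝ, h = fun s => mp s - mm s := ⟨_, rfl⟩
    have hhval : ∀ s, h s = mp s - mm s := fun s => by rw [hh]
    -- bound on |f₂|
    obtain ⟨xB, -, hxB⟩ := maxOnAux (M := M) (g := fun x => |(f x).2|) hf2.abs isClosed_univ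
      ⟨xp, mem_univ _⟩
    obtain ⟨B, hB⟩ : ∃ B : ℝ, B = |(f xB).2| := ⟨_, rfl⟩
    have hBnn : 0 ≤ B := by rw [hB]; exact abs_nonneg _
    have hBb : ∀ x : M, |(f x).2| ≤ B := fun x => by rw [hB]; exact hxB x (mem_univ _)
    -- Lipschitz estimates
    have hgdiff : ∀ s s' (x : M), g s x ≤ g s' x + B * |s - s'| := by
      intro s s' x
      rw [hgval, hgval]
      have h2 : (s - s') * (f x).2 ≤ |s - s'| * |(f x).2| := by
        calc (s - s') * (f x).2 ≤ |(s - s') * (f x).2| := le_abs_self _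
        _ = |s - s'| * |(f x).2| := abs_mul _ _
      nlinarith [hBb x, abs_nonneg (s - s')]
    have hmmLip : ∀ s s', mm s ≤ mm s' + B * |s - s'| := by
      intro s s'
      rw [hmmval, hmmval]
      calc g s (xm s) ≤ g s' (xm s) + B * |s - s'| := hgdiff s s' _
      _ ≤ g s' (xm s') + B * |s - s'| := by
          have := hxmMax s' (xm s) (hxmMem s); linarith
    have hmpLip : ∀ s s', mp s ≤ mp s' + B * |s - s'| := by
      intro s s'
      rw [hmpval, hmpval]
      calc g s (xP s) ≤ g s' (xP s) + B * |s - s'| := hgdiff s s' _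
      _ ≤ g s' (xP s') + B * |s - s'| := by
          have := hxPMax s' (xP s) (hxPMem s); linarith
    have hcont : Continuous h := by
      have hlip : LipschitzWith (Real.toNNReal (2 * B)) h := by
        apply LipschitzWith.of_dist_le_mul
        intro s s'
        rw [Real.dist_eq, Real.dist_eq, Real.coe_toNNReal _ (by linarith)]
        have h1 := hmmLip s s'
        have h2 := hmmLip s' s
        have h3 := hmpLip s s'
        have h4 := hmpLip s' s
        rw [abs_sub_comm s' s] at h2 h4
        rw [hhval, hhval, abs_le]
        constructor <;> nlinarith [abs_nonneg (s - s')]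
      exact hlip.continuous
    -- global max C of the untilted functional
    obtain ⟨xC, -, hxC⟩ := maxOnAux (M := M) (g := fun x => t1 * (f x).1 + t2 * (f x).2)
      ((continuous_const.mul hf1).add (continuous_const.mul hf2)) isClosed_univ ⟨xp, mem_univ _⟩
    obtain ⟨C, hC⟩ : ∃ C : ℝ, C = t1 * (f xC).1 + t2 * (f xC).2 := ⟨_, rfl⟩
    have hCb : ∀ x : M, t1 * (f x).1 + t2 * (f x).2 ≤ C := fun x => by
      rw [hC]; exact hxC x (mem_univ _)
    have hτC : τ ≤ C := by rw [hτ]; exact hCb xp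
    obtain ⟨s₂, hs₂⟩ : ∃ s₂ : ℝ, s₂ = max 0 ((C - τ) / ((f xq).2 - z2)) := ⟨_, rfl⟩
    obtain ⟨s₁, hs₁⟩ : ∃ s₁ : ℝ, s₁ = min 0 (-((C - τ) / (z2 - (f xp).2))) := ⟨_, rfl⟩
    have hs₂0 : 0 ≤ s₂ := by rw [hs₂]; exact le_max_left _ _
    have hs₁0 : s₁ ≤ 0 := by rw [hs₁]; exact min_le_left _ _
    have hs₁₂ : s₁ ≤ s₂ := le_trans hs₁0 hs₂0
    have hhs₂ : 0 ≤ h s₂ := by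
      have hq' : τ + s₂ * (f xq).2 ≤ mp s₂ := by
        have hle := hxPMax s₂ xq hxqMp
        rw [hgval] at hle
        rw [hmpval]
        calc τ + s₂ * (f xq).2 = t1 * (f xq).1 + (t2 + s₂) * (f xq).2 := by
              rw [← hτq]; ring
        _ ≤ g s₂ (xP s₂) := hle
      have hm' : mm s₂ ≤ C + s₂ * z2 := by
        have h2 : s₂ * (f (xm s₂)).2 ≤ s₂ * z2 :=
          mul_le_mul_of_nonneg_left ((hMmval _).mp (hxmMem s₂)) hs₂0
        have h3 := hCb (xm s₂)
        rw [hmmval, hgval]; linarith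
      have hs₂big : C - τ ≤ s₂ * ((f xq).2 - z2) := by
        have hle : (C - τ) / ((f xq).2 - z2) ≤ s₂ := by rw [hs₂]; exact le_max_right _ _
        rw [div_le_iff₀ (by linarith)] at hle
        linarith
      rw [hhval]; linarith
    have hhs₁ : h s₁ ≤ 0 := by
      have hp' : τ + s₁ * (f xp).2 ≤ mm s₁ := by
        have hle := hxmMax s₁ xp hxpMm
        rw [hgval] at hle
        rw [hmmval]
        calc τ + s₁ * (f xp).2 = t1 * (f xp).1 + (t2 + s₁) * (f xp).2 := by
              rw [hτ]; ring
        _ ≤ g s₁ (xm s₁) := hle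
      have hm' : mp s₁ ≤ C + s₁ * z2 := by
        have h2 : s₁ * (f (xP s₁)).2 ≤ s₁ * z2 :=
          mul_le_mul_of_nonpos_left ((hMpval _).mp (hxPMem s₁)) hs₁0
        have h3 := hCb (xP s₁)
        rw [hmpval, hgval]; linarith
      have hs₁big : C - τ ≤ -s₁ * (z2 - (f xp).2) := by
        have hle : s₁ ≤ -((C - τ) / (z2 - (f xp).2)) := by rw [hs₁]; exact min_le_right _ _
        have h2 : (C - τ) / (z2 - (f xp).2) ≤ -s₁ := by linarith
        rw [div_le_iff₀ (by linarith)] at h2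
        linarith
      rw [hhval]; linarith
    -- IVT
    obtain ⟨s, -, hs0⟩ := intermediate_value_Icc hs₁₂ hcont.continuousOn ⟨hhs₁, hhs₂⟩
    have heqm : mp s = mm s := by rw [hhval] at hs0; linarith
    have hglob : ∀ y : M, g s y ≤ mm s := by
      intro y
      rcases le_total ((f y).2) z2 with hy | hy
      · rw [hmmval]; exact hxmMax s y ((hMmval y).mpr hy)
      · calc g s y ≤ g s (xP s) := hxPMax s y ((hMpval y).mpr hy)
        _ = mp s := (hmpval s).symm
        _ = mm s := heqm
    have hA := hconn (t1, t2 + s) (le_of_lt ht1) (by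
      intro hcon
      have h1 : t1 = 0 := congrArg Prod.fst hcon
      linarith)
    have hmemA : ∀ x : M, (∀ y : M, g s y ≤ g s x) →
        x ∈ {x : M | ∀ y : M, (t1, t2 + s).1 * (f y).1 + (t1, t2 + s).2 * (f y).2 ≤
          (t1, t2 + s).1 * (f x).1 + (t1, t2 + s).2 * (f x).2} := by
      intro x hx y
      have := hx y
      rw [hgval, hgval] at this
      exact this
    have hxmA := hmemA (xm s) (fun y => by rw [← hmmval]; exact hglob y)
    have hxPA := hmemA (xP s) (fun y => by
      rw [show g s (xP s) = mm s by rw [← hmpval]; exact heqm]; exact hglob y)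
    have hsub : {x : M | ∀ y : M, (t1, t2 + s).1 * (f y).1 + (t1, t2 + s).2 * (f y).2 ≤
          (t1, t2 + s).1 * (f x).1 + (t1, t2 + s).2 * (f x).2} ⊆ Mm ∪ Mp := by
      intro x _
      rcases le_total ((f x).2) z2 with hx | hx
      · exact Or.inl ((hMmval x).mpr hx)
      · exact Or.inr ((hMpval x).mpr hx)
    obtain ⟨x₀, hx₀A, hx₀m, hx₀p⟩ :=
      (isPreconnected_closed_iff.mp hA) Mm Mp hMmC hMpC hsub
        ⟨xm s, hxmA, hxmMem s⟩ ⟨xP s, hxPA, hxPMem s⟩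
    have hx₀2 : (f x₀).2 = z2 := le_antisymm ((hMmval x₀).mp hx₀m) ((hMpval x₀).mp hx₀p)
    have hx₀max : ∀ y : M, t1 * (f y).1 + (t2 + s) * (f y).2 ≤
        t1 * (f x₀).1 + (t2 + s) * (f x₀).2 := hx₀A
    have hlow : τ + s * z2 ≤ t1 * (f x₀).1 + (t2 + s) * (f x₀).2 := by
      rcases le_total 0 s with hspos | hsneg
      · have h1 := hx₀max xq
        have h3 : s * z2 ≤ s * (f xq).2 := mul_le_mul_of_nonneg_left (le_of_lt hzq) hspos
        linarith
      · have h1 := hx₀max xp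
        have h3 : s * z2 ≤ s * (f xp).2 := mul_le_mul_of_nonpos_left (le_of_lt hpz) hsneg
        linarith
    rw [hx₀2] at hlow
    refine ⟨x₀, by rw [hx₀2, hz2], ?_⟩
    rw [← hz1]
    have hfin : t1 * z1 ≤ t1 * (f x₀).1 := by linarith
    exact le_of_mul_le_mul_left hfin ht1

private lemma core {M : Type*} [TopologicalSpace M] [CompactSpace M]
    (f : M → ℝ × ℝ) (hf : Continuous f)
    (hconn : ∀ t : ℝ × ℝ, 0 ≤ t.1 → t ≠ 0 →
      IsPreconnected {x : M | ∀ y : M,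
        t.1 * (f y).1 + t.2 * (f y).2 ≤ t.1 * (f x).1 + t.2 * (f x).2})
    (xp xq : M) (lam : ℝ) (h0 : 0 ≤ lam) (h1 : lam ≤ 1) :
    ∃ x : M, (f x).2 = lam * (f xp).2 + (1 - lam) * (f xq).2 ∧
      lam * (f xp).1 + (1 - lam) * (f xq).1 ≤ (f x).1 := by
  rcases le_total ((f xp).2) ((f xq).2) with hle | hle
  · exact core' f hf hconn xp xq hle lam h0 h1
  · obtain ⟨x, hx2, hx1⟩ := core' f hf hconn xq xp hle (1 - lam) (by linarith) (by linarith)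
    refine ⟨x, ?_, ?_⟩
    · rw [hx2]; ring
    · calc lam * (f xp).1 + (1 - lam) * (f xq).1
          = (1 - lam) * (f xq).1 + (1 - (1 - lam)) * (f xp).1 := by ring
      _ ≤ (f x).1 := hx1

theorem stmt_6 {M : Type*} [TopologicalSpace M] [CompactSpace M]
    (f : M → ℝ × ℝ) (hf : Continuous f)
    (hconn : ∀ t : ℝ × ℝ, 0 ≤ t.1 → t ≠ 0 →
      IsPreconnected {x : M | ∀ y : M,
        t.1 * (f y).1 + t.2 * (f y).2 ≤ t.1 * (f x).1 + t.2 * (f x).2})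
    (V : ℝ → EReal)
    (hV : ∀ c, V c = sSup {y : EReal | ∃ x : M, (f x).2 = c ∧ y = (((f x).1 : ℝ) : EReal)}) :
    (∀ (c c' lam : ℝ), 0 ≤ lam → lam ≤ 1 → V c ≠ ⊥ → V c' ≠ ⊥ → V c ≠ ⊤ → V c' ≠ ⊤ →
      (lam : EReal) * V c + ((1 - lam : ℝ) : EReal) * V c' ≤ V (lam * c + (1 - lam) * c')) ∧
    (∀ c : ℝ, V c = sSup {v : EReal |
      ∃ y ∈ convexHull ℝ (Set.range f), y.2 = c ∧ v = ((y.1 : ℝ) : EReal)}) := by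
  have hf1 : Continuous fun x : M => (f x).1 := continuous_fst.comp hf
  have hf2 : Continuous fun x : M => (f x).2 := continuous_snd.comp hf
  -- attainment of V
  have hatt : ∀ (c : ℝ) (x₁ : M), (f x₁).2 = c →
      ∃ xs : M, (f xs).2 = c ∧ V c = (((f xs).1 : ℝ) : EReal) ∧
        ∀ x : M, (f x).2 = c → (f x).1 ≤ (f xs).1 := by
    intro c x₁ hx₁
    have hcl : IsClosed {x : M | (f x).2 = c} := isClosed_eq hf2 continuous_const
    obtain ⟨xs, hxs, hmax⟩ := maxOnAux (g := fun x : M => (f x).1) hf1 hcl ⟨x₁, hx₁⟩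
    refine ⟨xs, hxs, ?_, fun x hx => hmax x hx⟩
    rw [hV]
    apply le_antisymm
    · apply sSup_le
      rintro v ⟨x, hx2, rfl⟩
      exact EReal.coe_le_coe_iff.mpr (hmax x hx2)
    · exact le_sSup ⟨xs, hxs, rfl⟩
  -- nonemptiness of fibers from V ≠ ⊥
  have hne : ∀ c : ℝ, V c ≠ ⊥ → ∃ x : M, (f x).2 = c := by
    intro c hc
    by_contra hcon
    push_neg at hcon
    apply hc
    rw [hV]
    refine (congrArg sSup ?_).trans sSup_empty
    rw [Set.eq_empty_iff_forall_notMem]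
    rintro v ⟨x, hx2, -⟩
    exact hcon x hx2
  constructor
  · intro c c' lam h0 h1 hbot hbot' _ _
    obtain ⟨x₁, hx₁⟩ := hne c hbot
    obtain ⟨x₁', hx₁'⟩ := hne c' hbot'
    obtain ⟨xs, hxs2, hxsV, -⟩ := hatt c x₁ hx₁
    obtain ⟨xs', hxs2', hxsV', -⟩ := hatt c' x₁' hx₁'
    obtain ⟨x, hx2, hx1⟩ := core f hf hconn xs xs' lam h0 h1
    rw [hxsV, hxsV']
    have hcoe : (lam : EReal) * (((f xs).1 : ℝ) : EReal) +
        ((1 - lam : ℝ) : EReal) * (((f xs').1 : ℝ) : EReal) =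
        ((lam * (f xs).1 + (1 - lam) * (f xs').1 : ℝ) : EReal) := by
      rw [EReal.coe_add, EReal.coe_mul, EReal.coe_mul]
    rw [hcoe, hV]
    calc ((lam * (f xs).1 + (1 - lam) * (f xs').1 : ℝ) : EReal)
        ≤ (((f x).1 : ℝ) : EReal) := EReal.coe_le_coe_iff.mpr hx1
    _ ≤ _ := le_sSup (by exact ⟨x, by rw [hx2, hxs2, hxs2'], rfl⟩)
  · intro c
    rw [hV]
    have hLconv : Convex ℝ {y : ℝ × ℝ | ∃ x : M, (f x).2 = y.2 ∧ y.1 ≤ (f x).1} := by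
      rintro y₁ ⟨x₁, h₁2, h₁1⟩ y₂ ⟨x₂, h₂2, h₂1⟩ a b ha hb hab
      obtain ⟨x, hx2, hx1⟩ := core f hf hconn x₁ x₂ a ha (by linarith)
      have hb' : b = 1 - a := by linarith
      refine ⟨x, ?_, ?_⟩
      · have : (a • y₁ + b • y₂).2 = a * y₁.2 + b * y₂.2 := rfl
        rw [this, hx2, h₁2, h₂2, hb']
      · have : (a • y₁ + b • y₂).1 = a * y₁.1 + b * y₂.1 := rfl
        rw [this, hb']
        have h1 : a * y₁.1 ≤ a * (f x₁).1 := mul_le_mul_of_nonneg_left h₁1 ha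
        have h2 : (1 - a) * y₂.1 ≤ (1 - a) * (f x₂).1 :=
          mul_le_mul_of_nonneg_left h₂1 (by linarith)
        linarith
    have hsubL : convexHull ℝ (Set.range f) ⊆
        {y : ℝ × ℝ | ∃ x : M, (f x).2 = y.2 ∧ y.1 ≤ (f x).1} := by
      apply convexHull_min ?_ hLconv
      rintro y ⟨x, rfl⟩
      exact ⟨x, rfl, le_refl _⟩
    apply le_antisymm
    · apply sSup_le_sSup
      rintro v ⟨x, hx2, hveq⟩
      exact ⟨f x, subset_convexHull ℝ _ ⟨x, rfl⟩, hx2, hveq⟩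
    · apply sSup_le
      rintro v ⟨y, hy, hy2, rfl⟩
      obtain ⟨x, hx2, hx1⟩ := hsubL hy
      calc ((y.1 : ℝ) : EReal) ≤ (((f x).1 : ℝ) : EReal) := EReal.coe_le_coe_iff.mpr hx1
      _ ≤ _ := le_sSup (by exact ⟨x, by rw [hx2, hy2], rfl⟩)
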